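/- Let p^m ≡ 3 (mod 4), α a nonzero non-square in F_{p^m}, β ≠ 0, and let C = ⟨(x²+γx+γ²/2)^i (x²-γx+γ²/2)^j⟩ be an ideal of 𝓡 = R[x]/⟨x^{4p^s}-(α+βu)⟩ with 0 ≤ i, j ≤ 2p^s. Then the annihilator of C in 𝓡 is ⟨(x²+γx+γ²/2)^{2p^s-i} (x²-γx+γ²/2)^{2p^s-j}⟩. -/

import Mathlib

open Polynomial

/-- The chain ring `R = F_{p^m}[u]/⟨u²⟩`. -/
abbrev Ru (K : Type) [Field K] : Type := K[X] ⧸ Ideal.span {(X : K[X]) ^ 2}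

noncomputable instance instCommRingRu (K : Type) [Field K] : CommRing (Ru K) := Ideal.Quotient.commRing _

/-- The element `u` of `R`. -/
noncomputable def uR (K : Type) [Field K] : Ru K :=
  Ideal.Quotient.mk _ (X : K[X])

/-- The natural inclusion of `F_{p^m}` into `R`. -/
noncomputable def tR (K : Type) [Field K] (a : K) : Ru K :=
  Ideal.Quotient.mk _ (C a : K[X])

/-- The ambient ring `R[x]/⟨xⁿ - λ⟩` of `λ`-constacyclic codes of length `n` over `R`. -/
abbrev RC (K : Type) [Field K] (lam : Ru K) (n : ℕ) : Type :=
  (Ru K)[X] ⧸ Ideal.span {(X : (Ru K)[X]) ^ n - C lam}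

/-- The canonical projection `R[x] → R[x]/⟨xⁿ - λ⟩`. -/
noncomputable def mkC (K : Type) [Field K] (lam : Ru K) (n : ℕ) :
    (Ru K)[X] →+* RC K lam n :=
  Ideal.Quotient.mk _

/-- The quadratic `x² + γx + γ²/2`, viewed over `R`. -/
noncomputable def qR (K : Type) [Field K] (g : K) : (Ru K)[X] :=
  X ^ 2 + C (tR K g) * X + C (tR K (g ^ 2 / 2))

noncomputable def tauR (K : Type) [Field K] : K →+* Ru K :=
  (Ideal.Quotient.mk _).comp Polynomial.C

lemma tR_eq (K : Type) [Field K] (a : K) : tR K a = tauR K a := rfl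

lemma uR_sq (K : Type) [Field K] : uR K * uR K = 0 := by
  show Ideal.Quotient.mk _ X * Ideal.Quotient.mk _ X = 0
  rw [← map_mul, Ideal.Quotient.eq_zero_iff_mem]
  exact Ideal.subset_span (by simp [sq])

lemma Ru_decomp (K : Type) [Field K] (r : Ru K) :
    ∃ a b : K, r = tauR K a + uR K * tauR K b := by
  obtain ⟨q, rfl⟩ := Ideal.Quotient.mk_surjective r
  refine ⟨q.coeff 0, q.coeff 1, ?_⟩
  show _ = Ideal.Quotient.mk _ _ + Ideal.Quotient.mk _ X * Ideal.Quotient.mk _ _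
  rw [← map_mul, ← map_add, Ideal.Quotient.eq, Ideal.mem_span_singleton]
  rw [Polynomial.X_pow_dvd_iff]
  intro d hd
  interval_cases d <;> simp

lemma Ru_inj (K : Type) [Field K] (a b : K)
    (h : tauR K a + uR K * tauR K b = 0) : a = 0 ∧ b = 0 := by
  have h' : Ideal.Quotient.mk (Ideal.span {(X : K[X])^2}) (C a + X * C b) = 0 := by
    rw [map_add, map_mul]; exact h
  rw [Ideal.Quotient.eq_zero_iff_mem, Ideal.mem_span_singleton] at h'
  have h3 : (C a + X * C b) = 0 := by
    refine eq_zero_of_dvd_of_natDegree_lt h' ?_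
    refine lt_of_le_of_lt (natDegree_add_le _ _) ?_
    have h4 : natDegree ((X : K[X]) * C b) ≤ 1 :=
      le_trans (natDegree_mul_le) (by simp)
    simp only [natDegree_C, natDegree_X_pow]
    omega
  constructor
  · have := congrArg (fun p => Polynomial.coeff p 0) h3
    simpa using this
  · have := congrArg (fun p => Polynomial.coeff p 1) h3
    simpa using this
noncomputable def PhiR (K : Type) [Field K] : K[X] →+* (Ru K)[X] :=
  Polynomial.mapRingHom (tauR K)

lemma Poly_decomp (K : Type) [Field K] (F : (Ru K)[X]) :
    ∃ f₀ f₁ : K[X], F = PhiR K f₀ + C (uR K) * PhiR K f₁ := by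
  induction F using Polynomial.induction_on' with
  | add p q hp hq =>
    obtain ⟨a0, a1, rfl⟩ := hp
    obtain ⟨b0, b1, rfl⟩ := hq
    exact ⟨a0 + b0, a1 + b1, by rw [map_add, map_add]; ring⟩
  | monomial n r =>
    obtain ⟨a, b, rfl⟩ := Ru_decomp K r
    refine ⟨Polynomial.monomial n a, Polynomial.monomial n b, ?_⟩
    simp only [PhiR, Polynomial.coe_mapRingHom, Polynomial.map_monomial]
    rw [← Polynomial.C_mul_X_pow_eq_monomial, ← Polynomial.C_mul_X_pow_eq_monomial,
        ← Polynomial.C_mul_X_pow_eq_monomial, map_add, map_mul]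
    ring

lemma Poly_inj (K : Type) [Field K] (f₀ f₁ : K[X])
    (h : PhiR K f₀ + C (uR K) * PhiR K f₁ = 0) : f₀ = 0 ∧ f₁ = 0 := by
  have key : ∀ n, f₀.coeff n = 0 ∧ f₁.coeff n = 0 := by
    intro n
    have := congrArg (fun p => Polynomial.coeff p n) h
    simp only [PhiR, Polynomial.coe_mapRingHom, Polynomial.coeff_add,
      Polynomial.coeff_C_mul, Polynomial.coeff_map, Polynomial.coeff_zero] at this
    exact Ru_inj K _ _ this
  exact ⟨Polynomial.ext fun n => (key n).1, Polynomial.ext fun n => (key n).2⟩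
lemma charK (p m : ℕ) (hp : p.Prime) (hm : 0 < m)
    (K : Type) [Field K] [Fintype K] (hK : Fintype.card K = p ^ m) : CharP K p := by
  have hq : CharP K (ringChar K) := ringChar.charP K
  have hqp : (ringChar K).Prime := CharP.char_is_prime K (ringChar K)
  obtain ⟨n, -, hcard⟩ := FiniteField.card K (ringChar K)
  have hd : p ∣ ringChar K ^ (n : ℕ) := by
    rw [← hcard, hK]
    exact dvd_pow_self p hm.ne'
  have : p = ringChar K := (Nat.prime_dvd_prime_iff_eq hp hqp).mp (hp.dvd_of_dvd_pow hd)
  rw [this]; exact hq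

section Facts
variable {K : Type} [Field K] {p : ℕ} [Fact p.Prime] [CharP K p] (hp2 : p ≠ 2)

lemma two_ne_zero_K (hp2 : p ≠ 2) : (2 : K) ≠ 0 := by
  have : ((2 : ℕ) : K) ≠ 0 := by
    rw [Ne, CharP.cast_eq_zero_iff K p]
    intro h
    exact hp2 ((Nat.prime_dvd_prime_iff_eq (Fact.out) Nat.prime_two).mp h)
  simpa using this

lemma PQ_eq (hp2 : p ≠ 2) {γ α₀ : K} (hγ : γ ^ 4 = -4 * α₀) :
    (X ^ 2 + C γ * X + C (γ ^ 2 / 2)) * (X ^ 2 + C (-γ) * X + C (γ ^ 2 / 2))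
      = X ^ 4 - C α₀ := by
  have h2 : (2 : K) ≠ 0 := two_ne_zero_K hp2
  have e1 : γ ^ 2 / 2 + γ ^ 2 / 2 - γ * γ = 0 := by field_simp; ring
  have e2 : (γ ^ 2 / 2) * (γ ^ 2 / 2) = -α₀ := by
    field_simp
    linear_combination hγ
  have E1 : C (γ ^ 2 / 2) + C (γ ^ 2 / 2) - C γ * C γ = (0 : K[X]) := by
    rw [← C_mul, ← C_add, ← C_sub, e1, C_0]
  have E2 : C (γ ^ 2 / 2) * C (γ ^ 2 / 2) = -C α₀ := by
    rw [← C_mul, e2, C_neg]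
  rw [map_neg]
  linear_combination (X ^ 2 : K[X]) * E1 + E2

lemma Frob_eq (s : ℕ) {α₀ α : K} (hα₀ : α₀ ^ p ^ s = α) :
    ((X : K[X]) ^ 4 - C α₀) ^ p ^ s = X ^ (4 * p ^ s) - C α := by
  haveI : CharP K[X] p := Polynomial.instCharP p
  rw [sub_pow_char_pow, ← pow_mul, ← C_pow, hα₀]

lemma P_ne_zero (γ c : K) : (X ^ 2 + C γ * X + C c : K[X]) ≠ 0 := by
  intro h
  have := congrArg (fun q => Polynomial.coeff q 2) h
  simp [coeff_C] at this

end Facts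
lemma qR_eq (K : Type) [Field K] (g : K) :
    qR K g = PhiR K (X ^ 2 + C g * X + C (g ^ 2 / 2)) := by
  simp [qR, PhiR, tR_eq, Polynomial.map_add, Polynomial.map_mul, Polynomial.map_pow,
    Polynomial.map_X, Polynomial.map_C]

set_option maxHeartbeats 1000000 in
theorem stmt19 (p s m : ℕ) (hp : p.Prime) (hodd : Odd p) (hs : 0 < s) (hm : 0 < m)
    (K : Type) [Field K] [Fintype K] (hK : Fintype.card K = p ^ m)
    (h3 : p ^ m % 4 = 3) (α β : K) (hα : α ≠ 0) (hns : ¬ IsSquare α) (hβ : β ≠ 0)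
    (α₀ : K) (hα₀ : α₀ ^ p ^ s = α) (γ : K) (hγ : γ ^ 4 = -4 * α₀) :
    ∀ i j : ℕ, i ≤ 2 * p ^ s → j ≤ 2 * p ^ s →
      ∀ f : RC K (tR K α + tR K β * uR K) (4 * p ^ s),
        (∀ c ∈ Ideal.span {mkC K (tR K α + tR K β * uR K) (4 * p ^ s)
            (qR K γ ^ i * qR K (-γ) ^ j)}, f * c = 0) ↔
          f ∈ Ideal.span {mkC K (tR K α + tR K β * uR K) (4 * p ^ s)
            (qR K γ ^ (2 * p ^ s - i) * qR K (-γ) ^ (2 * p ^ s - j))} := by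
  haveI : CharP K p := charK p m hp hm K hK
  haveI : Fact p.Prime := ⟨hp⟩
  have hp2 : p ≠ 2 := by
    rintro rfl; exact (Nat.not_odd_iff_even.mpr even_two) hodd
  -- notation
  set lam : Ru K := tR K α + tR K β * uR K with hlam
  set n : ℕ := 4 * p ^ s with hn
  set e : ℕ := p ^ s with he
  set Pp : K[X] := X ^ 2 + C γ * X + C (γ ^ 2 / 2) with hPp
  set Pm : K[X] := X ^ 2 + C (-γ) * X + C (γ ^ 2 / 2) with hPm
  set Φ : K[X] →+* (Ru K)[X] := PhiR K with hPhi
  set M : (Ru K)[X] →+* RC K lam n := mkC K lam n with hM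
  -- generators as images of K-polynomials
  have hqp : qR K γ = Φ Pp := qR_eq K γ
  have hqm : qR K (-γ) = Φ Pm := by
    rw [qR_eq K (-γ), show ((-γ : K)) ^ 2 = γ ^ 2 by ring]
  -- key polynomial identities
  have hPQ : Pp * Pm = X ^ 4 - C α₀ := PQ_eq hp2 hγ
  have hFrob : ((Pp * Pm) ^ e : K[X]) = X ^ n - C α := by
    rw [hPQ, he, hn, Frob_eq s hα₀]
  have huu : (C (uR K) : (Ru K)[X]) * C (uR K) = 0 := by
    rw [← C_mul, uR_sq, C_0]
  have hgen : (X : (Ru K)[X]) ^ n - C lam = Φ ((Pp * Pm) ^ e) - C (uR K) * Φ (C β) := by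
    rw [hFrob]
    have : Φ ((X : K[X]) ^ n - C α) = X ^ n - C (tauR K α) := by
      simp [hPhi, PhiR]
    rw [this, hlam, tR_eq, tR_eq]
    have : (C (tauR K α + tauR K β * uR K) : (Ru K)[X])
        = C (tauR K α) + C (uR K) * C (tauR K β) := by
      rw [← C_mul, ← C_add]
      ring_nf
    rw [this]
    have hcb : Φ (C β) = C (tauR K β) := by simp [hPhi, PhiR]
    rw [hcb]
    ring
  have hD : M ((X : (Ru K)[X]) ^ n - C lam) = 0 := by
    rw [hM]
    show Ideal.Quotient.mk _ _ = 0
    rw [Ideal.Quotient.eq_zero_iff_mem]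
    exact Ideal.subset_span rfl
  intro i j hi hj f
  have hPpne : Pp ≠ 0 := P_ne_zero γ _
  have hPmne : Pm ≠ 0 := P_ne_zero (-γ) _
  have hpow : Pp ^ (2 * e - i) * Pm ^ (2 * e - j) * (Pp ^ i * Pm ^ j)
      = (Pp * Pm) ^ e * (Pp * Pm) ^ e := by
    rw [mul_mul_mul_comm, ← pow_add, ← pow_add, Nat.sub_add_cancel hi,
        Nat.sub_add_cancel hj, ← pow_add, mul_pow, two_mul]
  constructor
  · -- hard direction
    intro h
    obtain ⟨F, rfl⟩ := Ideal.Quotient.mk_surjective f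
    have h0 := h _ (Ideal.mem_span_singleton_self _)
    have h0' : M (F * Φ (Pp ^ i * Pm ^ j)) = 0 := by
      rw [map_mul, map_mul, map_pow, map_pow, ← hqp, ← hqm, ← map_mul M]
      exact h0
    rw [hM] at h0'
    rw [show (mkC K lam n) (F * Φ (Pp ^ i * Pm ^ j))
        = Ideal.Quotient.mk _ (F * Φ (Pp ^ i * Pm ^ j)) from rfl,
      Ideal.Quotient.eq_zero_iff_mem, Ideal.mem_span_singleton] at h0'
    obtain ⟨G, hG⟩ := h0'
    obtain ⟨f₀, f₁, hFd⟩ := Poly_decomp K F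
    obtain ⟨g₀, g₁, hGd⟩ := Poly_decomp K G
    rw [hFd, hGd, hgen] at hG
    -- extract the two K[X] component equations
    have hcomp : Φ (f₀ * (Pp ^ i * Pm ^ j) - (Pp * Pm) ^ e * g₀)
        + C (uR K) * Φ (f₁ * (Pp ^ i * Pm ^ j) - ((Pp * Pm) ^ e * g₁ - C β * g₀)) = 0 := by
      simp only [map_mul, map_pow] at hG
      simp only [map_sub, map_mul, map_pow]
      linear_combination hG - Φ (C β) * Φ g₁ * huu
    obtain ⟨hA, hB⟩ := Poly_inj K _ _ hcomp
    rw [sub_eq_zero] at hA hB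
    -- the key cancellation claim
    have claim : C β * f₀ = Pp ^ (2 * e - i) * Pm ^ (2 * e - j) * g₁
        - (Pp * Pm) ^ e * f₁ := by
      apply mul_right_cancel₀ (mul_ne_zero (pow_ne_zero i hPpne) (pow_ne_zero j hPmne))
      linear_combination (C β) * hA + (Pp * Pm) ^ e * hB - g₁ * hpow
    have hβc : (C β : K[X]) * C β⁻¹ = 1 := by
      rw [← C_mul, mul_inv_cancel₀ hβ, C_1]
    have hf₀ : f₀ = Pp ^ (2 * e - i) * Pm ^ (2 * e - j) * (C β⁻¹ * g₁)
        - (Pp * Pm) ^ e * (C β⁻¹ * f₁) := by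
      linear_combination C β⁻¹ * claim - f₀ * hβc
    have hβΦ : Φ (C β) * Φ (C β⁻¹) = 1 := by
      rw [← map_mul, hβc, map_one]
    have hF : F = Φ (Pp ^ (2 * e - i) * Pm ^ (2 * e - j)) * Φ (C β⁻¹ * g₁)
        - ((X : (Ru K)[X]) ^ n - C lam) * Φ (C β⁻¹ * f₁) := by
      rw [hFd, hf₀, hgen]
      simp only [map_sub, map_mul, map_pow]
      linear_combination (- C (uR K) * Φ f₁) * hβΦ
    refine (Ideal.mem_span_singleton (α := RC K lam n)).mpr ?_
    refine ⟨M (Φ (C β⁻¹ * g₁)), ?_⟩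
    have hMF : (Ideal.Quotient.mk (Ideal.span {(X : (Ru K)[X]) ^ n - C lam}) F) = M F := rfl
    have hF' : M F = M (Φ (Pp ^ (2 * e - i) * Pm ^ (2 * e - j)) * Φ (C β⁻¹ * g₁)) := by
      rw [hF, map_sub, map_mul M, map_mul M, hD]; simp; exact zero_mul (M₀ := RC K lam n) _
    rw [hMF, hF', hqp, hqm, ← map_pow, ← map_pow, ← map_mul Φ, ← map_mul M]
    simp only [map_mul, mul_assoc]
  · -- easy direction
    intro h c hc
    replace h := (Ideal.mem_span_singleton (α := RC K lam n)).mp h; replace hc := (Ideal.mem_span_singleton (α := RC K lam n)).mp hc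
    obtain ⟨d, rfl⟩ := h
    obtain ⟨d', rfl⟩ := hc
    have hz : M (qR K γ ^ (2 * p ^ s - i) * qR K (-γ) ^ (2 * p ^ s - j))
        * M (qR K γ ^ i * qR K (-γ) ^ j) = 0 := by
      rw [hqp, hqm, ← map_mul M]
      have harg : (Φ Pp) ^ (2 * p ^ s - i) * (Φ Pm) ^ (2 * p ^ s - j)
          * ((Φ Pp) ^ i * (Φ Pm) ^ j)
          = Φ ((Pp * Pm) ^ e) * Φ ((Pp * Pm) ^ e) := by
        rw [← map_pow, ← map_pow, ← map_pow, ← map_pow, ← map_mul, ← map_mul, ← map_mul,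
          ← map_mul]
        exact congrArg Φ hpow
      rw [harg]
      have hE : Φ ((Pp * Pm) ^ e) = ((X : (Ru K)[X]) ^ n - C lam) + C (uR K) * Φ (C β) := by
        rw [hgen]; ring
      rw [hE]
      have expand : (((X : (Ru K)[X]) ^ n - C lam) + C (uR K) * Φ (C β))
          * (((X : (Ru K)[X]) ^ n - C lam) + C (uR K) * Φ (C β))
          = ((X : (Ru K)[X]) ^ n - C lam)
            * (((X : (Ru K)[X]) ^ n - C lam) + 2 * (C (uR K) * Φ (C β)))
            + (C (uR K) * C (uR K)) * (Φ (C β) * Φ (C β)) := by ring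
      rw [expand, huu, zero_mul, add_zero, map_mul, hD]; exact zero_mul (M₀ := RC K lam n) _
    calc M (qR K γ ^ (2 * p ^ s - i) * qR K (-γ) ^ (2 * p ^ s - j)) * d
        * (M (qR K γ ^ i * qR K (-γ) ^ j) * d')
        = (M (qR K γ ^ (2 * p ^ s - i) * qR K (-γ) ^ (2 * p ^ s - j))
          * M (qR K γ ^ i * qR K (-γ) ^ j)) * (d * d') := by ring
      _ = 0 := by rw [hz]; exact zero_mul (M₀ := RC K lam n) _
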